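/- Let X and Y be Banach spaces and T : Y → X a continuous linear operator with dense range. If Y has property (σ) — every countable intersection of coseparable closed subspaces of Y is coseparable — then X also has property (σ). Equivalently stated via the kernel characterization: if for every sequence (g_n) ⊂ Y* the subspace ⋂_n ker(g_n) is coseparable in Y, then for every sequence (f_n) ⊂ X* the subspace ⋂_n ker(f_n) is coseparable in X. -/

import Mathlib

/-- Property (σ) passes from `Y` to `X` along a continuous linear operator with dense range. -/
theorem property_sigma_of_sigma_generated
    {X Y : Type*} [NormedAddCommGroup X] [NormedSpace ℝ X] [CompleteSpace X]
    [NormedAddCommGroup Y] [NormedSpace ℝ Y] [CompleteSpace Y]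
    (T : Y →L[ℝ] X) (hT : DenseRange T)
    (hσ : ∀ g : ℕ → (Y →L[ℝ] ℝ),
      TopologicalSpace.SeparableSpace (Y ⧸ (⨅ n, LinearMap.ker (g n : Y →ₗ[ℝ] ℝ)))) :
    ∀ f : ℕ → (X →L[ℝ] ℝ),
      TopologicalSpace.SeparableSpace (X ⧸ (⨅ n, LinearMap.ker (f n : X →ₗ[ℝ] ℝ))) := by
  intro f
  set Z : Submodule ℝ X := ⨅ n, LinearMap.ker (f n : X →ₗ[ℝ] ℝ) with hZ
  set g : ℕ → (Y →L[ℝ] ℝ) := fun n => (f n).comp T with hg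
  set W : Submodule ℝ Y := ⨅ n, LinearMap.ker (g n : Y →ₗ[ℝ] ℝ) with hW
  haveI : TopologicalSpace.SeparableSpace (Y ⧸ W) := hσ g
  -- the map Y → X ⧸ Z
  let q : Y →ₗ[ℝ] X ⧸ Z := Z.mkQ.comp (T : Y →ₗ[ℝ] X)
  have hq_cont : Continuous q := by
    exact (Z.isOpenQuotientMap_mkQ.continuous).comp T.continuous
  have hker : W ≤ LinearMap.ker q := by
    intro y hy
    simp only [hW, Submodule.mem_iInf] at hy
    have : T y ∈ Z := by
      rw [hZ, Submodule.mem_iInf]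
      intro n
      exact hy n
    simpa [q, Submodule.Quotient.mk_eq_zero] using this
  -- lift to Y ⧸ W
  let φ : Y ⧸ W →ₗ[ℝ] X ⧸ Z := W.liftQ q hker
  have hφ_cont : Continuous φ := by
    rw [W.isOpenQuotientMap_mkQ.isQuotientMap.continuous_iff]
    exact hq_cont
  have hφ_dense : DenseRange φ := by
    have hq_dense : DenseRange q := by
      have h1 : DenseRange (Z.mkQ : X → X ⧸ Z) :=
        (Submodule.Quotient.mk_surjective Z).denseRange
      exact h1.comp hT Z.isOpenQuotientMap_mkQ.continuous
    have : Set.range φ = Set.range q := by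
      ext x
      constructor
      · rintro ⟨y, rfl⟩
        obtain ⟨y', rfl⟩ := Submodule.Quotient.mk_surjective W y
        exact ⟨y', rfl⟩
      · rintro ⟨y, rfl⟩
        exact ⟨Submodule.Quotient.mk y, rfl⟩
    rw [DenseRange, this]
    exact hq_dense
  exact hφ_dense.separableSpace hφ_cont
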